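/- Let d ≥ 2 and t ∈ (0, 1]. If ψ = 2/sqrt(d) and t = 1 − 1/d, then for sufficiently large d, (ψ²/(1 − 2·sqrt(t² − ψ²) + t²))^{(d−2)/2} ≥ e^{−3/2}·(1 + o(1)); in particular there exists d₀ and a constant c > 0 such that for all d ≥ d₀ this quantity is at least c. -/

import Mathlib

open Filter

set_option maxHeartbeats 1000000

lemma phase_key (d : ℕ) (hd : 12 ≤ d) :
    Real.exp (-(3:ℝ)/2) ≤ ((2 / Real.sqrt d) ^ 2
            / (1 - 2 * Real.sqrt ((1 - 1 / (d:ℝ)) ^ 2 - (2 / Real.sqrt d) ^ 2)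
              + (1 - 1 / (d:ℝ)) ^ 2)) ^ (((d:ℝ) - 2) / 2) ∧
    ((2 / Real.sqrt d) ^ 2
            / (1 - 2 * Real.sqrt ((1 - 1 / (d:ℝ)) ^ 2 - (2 / Real.sqrt d) ^ 2)
              + (1 - 1 / (d:ℝ)) ^ 2)) ^ (((d:ℝ) - 2) / 2) ≤ 1 := by
  have hx : (12:ℝ) ≤ (d:ℝ) := by exact_mod_cast hd
  generalize hxdef : (d:ℝ) = x at *
  have hx0 : (0:ℝ) < x := by linarith
  have hpsisq : (2 / Real.sqrt x) ^ 2 = 4 * (1 / x) := by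
    rw [div_pow, Real.sq_sqrt hx0.le]; ring
  rw [hpsisq]
  obtain ⟨u, hu⟩ : ∃ u : ℝ, u = 1 / x := ⟨_, rfl⟩
  rw [← hu]
  have hu0 : (0:ℝ) < u := by rw [hu]; positivity
  have hu12 : u ≤ 1 / 12 := by
    rw [hu]; apply one_div_le_one_div_of_le <;> linarith
  have hux : u * x = 1 := by rw [hu]; field_simp
  have ht0 : (0:ℝ) < 1 - u := by linarith
  have hinner : (1 - u) ^ 2 - 4 * u = 1 - 6 * u + u ^ 2 := by ring
  have hinner0 : 0 ≤ (1 - u) ^ 2 - 4 * u := by nlinarith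
  obtain ⟨s, hsdef⟩ : ∃ s : ℝ, s = Real.sqrt ((1 - u) ^ 2 - 4 * u) := ⟨_, rfl⟩
  rw [← hsdef]
  have hs0 : 0 ≤ s := hsdef ▸ Real.sqrt_nonneg _
  have hssq : s ^ 2 = (1 - u) ^ 2 - 4 * u := by rw [hsdef]; exact Real.sq_sqrt hinner0
  have hslb : 1 - 3 * u - 11 / 2 * u ^ 2 ≤ s := by
    have hb0 : 0 ≤ 1 - 3 * u - 11 / 2 * u ^ 2 := by nlinarith
    rw [hsdef, show (1:ℝ) - 3 * u - 11 / 2 * u ^ 2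
        = Real.sqrt ((1 - 3 * u - 11 / 2 * u ^ 2) ^ 2) from (Real.sqrt_sq hb0).symm]
    apply Real.sqrt_le_sqrt
    rw [hinner]
    have hc : 0 ≤ 3 - 33 * u - 121 / 4 * u ^ 2 := by
      nlinarith [mul_le_mul hu12 hu12 hu0.le (by norm_num : (0:ℝ) ≤ 1 / 12)]
    nlinarith [mul_nonneg (sq_nonneg u) hc]
  have hDlb : 4 * u ≤ 1 - 2 * s + (1 - u) ^ 2 := by nlinarith [sq_nonneg (1 - s)]
  have hD0 : (0:ℝ) < 1 - 2 * s + (1 - u) ^ 2 := by nlinarith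
  have hDub : 1 - 2 * s + (1 - u) ^ 2 ≤ 4 * u + 12 * u ^ 2 := by nlinarith [hslb]
  have he0 : 0 ≤ (x - 2) / 2 := by linarith
  have hratio : x / (x + 3) ≤ (4 * u) / (1 - 2 * s + (1 - u) ^ 2) := by
    have h1 : (4 * u) / (4 * u + 12 * u ^ 2) = x / (x + 3) := by
      rw [hu]; field_simp; ring
    calc x / (x + 3) = (4 * u) / (4 * u + 12 * u ^ 2) := h1.symm
      _ ≤ (4 * u) / (1 - 2 * s + (1 - u) ^ 2) :=
          div_le_div_of_nonneg_left (by positivity) hD0 hDub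
  have hratio1 : (4 * u) / (1 - 2 * s + (1 - u) ^ 2) ≤ 1 := by
    rw [div_le_one hD0]; linarith
  constructor
  · have hgoal : Real.exp (-(3:ℝ)/2) ≤ (x / (x + 3)) ^ ((x - 2) / 2) := by
      have hb : (0:ℝ) < x / (x + 3) := by positivity
      rw [Real.rpow_def_of_pos hb, Real.exp_le_exp]
      have hlog : Real.log ((x + 3) / x) ≤ 3 / x := by
        have h := Real.log_le_sub_one_of_pos (show (0:ℝ) < (x + 3) / x by positivity)
        have heq : (x + 3) / x - 1 = 3 / x := by field_simp; ring
        linarith [heq ▸ h]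
      have hloginv : Real.log (x / (x + 3)) = - Real.log ((x + 3) / x) := by
        rw [← Real.log_inv]; congr 1; field_simp
      have h3x : (0:ℝ) < 3 / x := by positivity
      have hkey : (x - 2) / 2 * (3 / x) = 3 / 2 - 3 / x := by field_simp
      calc -(3:ℝ)/2 ≤ -((x - 2) / 2 * (3 / x)) := by rw [hkey]; linarith
        _ ≤ -((x - 2) / 2 * Real.log ((x + 3) / x)) := by
            apply neg_le_neg; exact mul_le_mul_of_nonneg_left hlog he0
        _ = Real.log (x / (x + 3)) * ((x - 2) / 2) := by rw [hloginv]; ring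
    calc Real.exp (-(3:ℝ)/2) ≤ (x / (x + 3)) ^ ((x - 2) / 2) := hgoal
      _ ≤ ((4 * u) / (1 - 2 * s + (1 - u) ^ 2)) ^ ((x - 2) / 2) :=
          Real.rpow_le_rpow (by positivity) hratio he0
  · exact Real.rpow_le_one (by positivity) hratio1 he0

theorem phase_step_integrand_bound :
    Real.exp (-(3:ℝ)/2) ≤
      Filter.liminf (fun d : ℕ =>
        ((2 / Real.sqrt d) ^ 2
            / (1 - 2 * Real.sqrt ((1 - 1 / (d:ℝ)) ^ 2 - (2 / Real.sqrt d) ^ 2)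
              + (1 - 1 / (d:ℝ)) ^ 2)) ^ (((d:ℝ) - 2) / 2)) Filter.atTop ∧
    ∃ d₀ : ℕ, ∃ c : ℝ, 0 < c ∧ ∀ d : ℕ, d₀ ≤ d →
      c ≤ ((2 / Real.sqrt d) ^ 2
            / (1 - 2 * Real.sqrt ((1 - 1 / (d:ℝ)) ^ 2 - (2 / Real.sqrt d) ^ 2)
              + (1 - 1 / (d:ℝ)) ^ 2)) ^ (((d:ℝ) - 2) / 2) := by
  have hev : ∀ᶠ d : ℕ in atTop, Real.exp (-(3:ℝ)/2) ≤
      ((2 / Real.sqrt d) ^ 2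
            / (1 - 2 * Real.sqrt ((1 - 1 / (d:ℝ)) ^ 2 - (2 / Real.sqrt d) ^ 2)
              + (1 - 1 / (d:ℝ)) ^ 2)) ^ (((d:ℝ) - 2) / 2) :=
    eventually_atTop.2 ⟨12, fun d hd => (phase_key d hd).1⟩
  have hub : ∀ᶠ d : ℕ in atTop,
      ((2 / Real.sqrt d) ^ 2
            / (1 - 2 * Real.sqrt ((1 - 1 / (d:ℝ)) ^ 2 - (2 / Real.sqrt d) ^ 2)
              + (1 - 1 / (d:ℝ)) ^ 2)) ^ (((d:ℝ) - 2) / 2) ≤ 1 :=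
    eventually_atTop.2 ⟨12, fun d hd => (phase_key d hd).2⟩
  exact ⟨Filter.le_liminf_of_le (Filter.isCoboundedUnder_ge_of_eventually_le _ hub) hev,
    12, Real.exp (-(3:ℝ)/2), Real.exp_pos _, fun d hd => (phase_key d hd).1⟩
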